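/- Let k > 0 and φ > 0 be real, let ξ0 ∈ ℝ, set c0 = k·coth(φ) and ξ = x − c0·t − ξ0, and define f(x,t) = 1 + e^{i k ξ + φ} and f'(x,t) = 1 + e^{i k ξ − φ}. Then f and f' satisfy the Hirota bilinear equation of the Benjamin–Ono equation: i(∂_t f' · f − f' · ∂_t f) = ∂_x² f' · f − 2 ∂_x f' · ∂_x f + f' · ∂_x² f holds at every real (x, t). -/

import Mathlib

/-- The Hirota bilinear equation associated with the Benjamin–Ono equation:
`i(∂_t f' · f − f' · ∂_t f) = ∂_x² f' · f − 2 ∂_x f' · ∂_x f + f' · ∂_x² f`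
at all real `(x,t)`, where `g` plays the role of `f'`. -/
def HirotaBO (f g : ℝ → ℝ → ℂ) : Prop :=
  ∀ x t : ℝ,
    Complex.I * (deriv (fun s => g x s) t * f x t - g x t * deriv (fun s => f x s) t) =
      deriv (fun y => deriv (fun z => g z t) y) x * f x t
        - 2 * deriv (fun y => g y t) x * deriv (fun y => f y t) x
        + g x t * deriv (fun y => deriv (fun z => f z t) y) x

lemma hx_exp (k c0 t ξ0 : ℝ) (w : ℂ) (x : ℝ) :
    HasDerivAt (fun y : ℝ => Complex.exp (Complex.I * (↑k * (↑y - ↑c0 * ↑t - ↑ξ0)) + w))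
      (Complex.I * ↑k * Complex.exp (Complex.I * (↑k * (↑x - ↑c0 * ↑t - ↑ξ0)) + w)) x := by
  have h1 : HasDerivAt (fun u : ℝ => (u : ℂ)) 1 x := by
    exact Complex.ofRealCLM.hasDerivAt
  have h8 := (((((h1.sub_const ((c0 : ℂ) * t)).sub_const (ξ0 : ℂ)).const_mul (k : ℂ)).const_mul
    Complex.I).add_const w).cexp
  convert h8 using 1 ; ring

lemma ht_exp (k c0 x ξ0 : ℝ) (w : ℂ) (t : ℝ) :
    HasDerivAt (fun s : ℝ => Complex.exp (Complex.I * (↑k * (↑x - ↑c0 * ↑s - ↑ξ0)) + w))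
      (-(Complex.I * ↑k * ↑c0) * Complex.exp (Complex.I * (↑k * (↑x - ↑c0 * ↑t - ↑ξ0)) + w)) t := by
  have h1 : HasDerivAt (fun u : ℝ => (u : ℂ)) 1 t := by
    exact Complex.ofRealCLM.hasDerivAt
  have h8 := ((((((h1.const_mul (c0 : ℂ)).const_sub (x : ℂ)).sub_const (ξ0 : ℂ)).const_mul
    (k : ℂ)).const_mul Complex.I).add_const w).cexp
  convert h8 using 1 ; ring

/-- the tau functions of the traveling periodic wave of the
Benjamin–Ono equation satisfy the Hirota bilinear equation. -/
theorem hirota_one_periodic (k φ ξ0 c0 : ℝ) (hk : 0 < k) (hφ : 0 < φ)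
    (hc0 : c0 = k * Real.cosh φ / Real.sinh φ)
    (f f' : ℝ → ℝ → ℂ)
    (hf : ∀ x t : ℝ, f x t =
      1 + Complex.exp (Complex.I * (k * (x - c0 * t - ξ0)) + φ))
    (hf' : ∀ x t : ℝ, f' x t =
      1 + Complex.exp (Complex.I * (k * (x - c0 * t - ξ0)) - φ)) :
    HirotaBO f f' := by
  intro x t
  have hfun : ∀ s t : ℝ, f s t =
      1 + Complex.exp (Complex.I * (↑k * (↑s - ↑c0 * ↑t - ↑ξ0)) + (φ : ℂ)) := hf
  have hfun' : ∀ s t : ℝ, f' s t =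
      1 + Complex.exp (Complex.I * (↑k * (↑s - ↑c0 * ↑t - ↑ξ0)) + (-(φ : ℂ))) := by
    intro s t; rw [hf']; rw [sub_eq_add_neg]
  -- time derivatives
  have dtf : deriv (fun s => f x s) t =
      -(Complex.I * ↑k * ↑c0) * Complex.exp (Complex.I * (↑k * (↑x - ↑c0 * ↑t - ↑ξ0)) + (φ : ℂ)) := by
    have : (fun s : ℝ => f x s) =
        fun s : ℝ => 1 + Complex.exp (Complex.I * (↑k * (↑x - ↑c0 * (s:ℂ) - ↑ξ0)) + (φ : ℂ)) :=
      funext fun s => hfun x s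
    rw [this]; exact ((ht_exp k c0 x ξ0 (φ : ℂ) t).const_add 1).deriv
  have dtf' : deriv (fun s => f' x s) t =
      -(Complex.I * ↑k * ↑c0) * Complex.exp (Complex.I * (↑k * (↑x - ↑c0 * ↑t - ↑ξ0)) + (-(φ:ℂ))) := by
    have : (fun s : ℝ => f' x s) =
        fun s : ℝ => 1 + Complex.exp (Complex.I * (↑k * (↑x - ↑c0 * (s:ℂ) - ↑ξ0)) + (-(φ : ℂ))) :=
      funext fun s => hfun' x s
    rw [this]; exact ((ht_exp k c0 x ξ0 (-(φ : ℂ)) t).const_add 1).deriv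
  -- first x derivatives (as functions)
  have dxfF : (fun y : ℝ => deriv (fun z => f z t) y) =
      fun y : ℝ => Complex.I * ↑k * Complex.exp (Complex.I * (↑k * ((y:ℂ) - ↑c0 * ↑t - ↑ξ0)) + (φ : ℂ)) := by
    funext y
    have : (fun z : ℝ => f z t) =
        fun z : ℝ => 1 + Complex.exp (Complex.I * (↑k * ((z:ℂ) - ↑c0 * ↑t - ↑ξ0)) + (φ : ℂ)) :=
      funext fun z => hfun z t
    rw [this]; exact ((hx_exp k c0 t ξ0 (φ : ℂ) y).const_add 1).deriv
  have dxfF' : (fun y : ℝ => deriv (fun z => f' z t) y) =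
      fun y : ℝ => Complex.I * ↑k * Complex.exp (Complex.I * (↑k * ((y:ℂ) - ↑c0 * ↑t - ↑ξ0)) + (-(φ:ℂ))) := by
    funext y
    have : (fun z : ℝ => f' z t) =
        fun z : ℝ => 1 + Complex.exp (Complex.I * (↑k * ((z:ℂ) - ↑c0 * ↑t - ↑ξ0)) + (-(φ : ℂ))) :=
      funext fun z => hfun' z t
    rw [this]; exact ((hx_exp k c0 t ξ0 (-(φ : ℂ)) y).const_add 1).deriv
  -- second x derivatives
  have dxxf : deriv (fun y => deriv (fun z => f z t) y) x =
      Complex.I * ↑k * (Complex.I * ↑k *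
        Complex.exp (Complex.I * (↑k * (↑x - ↑c0 * ↑t - ↑ξ0)) + (φ : ℂ))) := by
    rw [dxfF]; exact ((hx_exp k c0 t ξ0 (φ : ℂ) x).const_mul (Complex.I * ↑k)).deriv
  have dxxf' : deriv (fun y => deriv (fun z => f' z t) y) x =
      Complex.I * ↑k * (Complex.I * ↑k *
        Complex.exp (Complex.I * (↑k * (↑x - ↑c0 * ↑t - ↑ξ0)) + (-(φ : ℂ)))) := by
    rw [dxfF']; exact ((hx_exp k c0 t ξ0 (-(φ : ℂ)) x).const_mul (Complex.I * ↑k)).deriv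
  have dxf : deriv (fun y => f y t) x =
      Complex.I * ↑k * Complex.exp (Complex.I * (↑k * (↑x - ↑c0 * ↑t - ↑ξ0)) + (φ : ℂ)) :=
    congrFun dxfF x
  have dxf' : deriv (fun y => f' y t) x =
      Complex.I * ↑k * Complex.exp (Complex.I * (↑k * (↑x - ↑c0 * ↑t - ↑ξ0)) + (-(φ : ℂ))) :=
    congrFun dxfF' x
  rw [dtf, dtf', dxxf, dxxf', dxf, dxf', hfun x t, hfun' x t]
  -- split off exp φ factors
  set E : ℂ := Complex.exp (Complex.I * (↑k * (↑x - ↑c0 * ↑t - ↑ξ0))) with hE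
  have hp : Complex.exp (Complex.I * (↑k * (↑x - ↑c0 * ↑t - ↑ξ0)) + (φ : ℂ))
      = E * (Real.exp φ : ℂ) := by
    rw [Complex.exp_add, Complex.ofReal_exp]
  have hm : Complex.exp (Complex.I * (↑k * (↑x - ↑c0 * ↑t - ↑ξ0)) + (-(φ : ℂ)))
      = E * (Real.exp (-φ) : ℂ) := by
    rw [Complex.exp_add, Complex.ofReal_exp, Complex.ofReal_neg]
  rw [hp, hm]
  -- the key real identity
  have hs : Real.sinh φ ≠ 0 := ne_of_gt (by positivity)
  have hcc : c0 * (Real.exp φ - Real.exp (-φ)) = k * (Real.exp φ + Real.exp (-φ)) := by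
    have h1 : c0 * Real.sinh φ = k * Real.cosh φ := by
      rw [hc0]; field_simp
    rw [Real.sinh_eq, Real.cosh_eq] at h1
    linarith
  have hccC : (c0 : ℂ) * ((Real.exp φ : ℂ) - (Real.exp (-φ) : ℂ))
      = (k : ℂ) * ((Real.exp φ : ℂ) + (Real.exp (-φ) : ℂ)) := by
    exact_mod_cast hcc
  linear_combination Complex.I ^ 2 * (k : ℂ) * E * hccC
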